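/- arXiv:2505.18193 — 5 statements merged into one kernel-verified Lean document; each statement's English description precedes it below -/
import Mathlib

section
/- Fix t ∈ [0,1] and Borel probability measures p and q on U. Writing γ_{x₀,x₁}(t) := φ⁻¹((1−t)φ(x₀) + t φ(x₁)) and γ'_{x₀,x₁}(t) for its time derivative, the Riemannian conditional flow-matching integrand integrates to the Euclidean one under the pushforward measures: ∫_{U×U} ‖Dφ(γ_{x₀,x₁}(t))( u_M(t, γ_{x₀,x₁}(t)) − γ'_{x₀,x₁}(t) )‖² d(p ⊗ q)(x₀, x₁) = ∫_{E×E} ‖u_E(t, (1−t)z₀ + t z₁) − (z₁ − z₀)‖² d((φ_#p) ⊗ (φ_#q))(z₀, z₁), where φ_#p denotes the pushforward (image) measure of p under φ, assuming the integrand is measurable. -/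
/-- The Riemannian conditional flow-matching integrand integrates (over `U × U`
under `p ⊗ q`) to the Euclidean one (over `E × E` under `(φ#p) ⊗ (φ#q)`). -/
theorem diffeoCFM_loss_eq
    {F E : Type*} [NormedAddCommGroup F] [NormedSpace ℝ F] [FiniteDimensional ℝ F]
    [NormedAddCommGroup E] [InnerProductSpace ℝ E] [FiniteDimensional ℝ E]
    [MeasurableSpace F] [BorelSpace F] [MeasurableSpace E] [BorelSpace E]
    (U : Set F) (hU : IsOpen U)
    (φ : F → E) (ψ : E → F)
    (hψφ : ∀ x ∈ U, ψ (φ x) = x) (hφψ : ∀ z : E, φ (ψ z) = z)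
    (hψU : ∀ z : E, ψ z ∈ U)
    (Dφ : F → (F →L[ℝ] E))
    (hDφ : ∀ x ∈ U, HasFDerivAt φ (Dφ x) x)
    (hDφc : ContinuousOn Dφ U)
    (hψc : Continuous ψ) (hψd : ∀ z : E, DifferentiableAt ℝ ψ z)
    (uM : ℝ → F → F) (uE : ℝ → E → E)
    (huE : ∀ t z, uE t z = Dφ (ψ z) (uM t (ψ z)))
    (t : ℝ) (ht : t ∈ Set.Icc (0 : ℝ) 1)
    (p q : MeasureTheory.Measure F)
    [MeasureTheory.IsProbabilityMeasure p] [MeasureTheory.IsProbabilityMeasure q]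
    (hp : p Uᶜ = 0) (hq : q Uᶜ = 0)
    (hφm : Measurable φ)
    -- the curve `γ_{x₀,x₁}` and its time derivative `γ'_{x₀,x₁}` at time `t`
    (γ : F → F → F) (hγ : ∀ x₀ x₁, γ x₀ x₁ = ψ ((1 - t) • φ x₀ + t • φ x₁))
    (γ' : F → F → F)
    (hγ' : ∀ x₀ x₁, HasDerivAt (fun s : ℝ => ψ ((1 - s) • φ x₀ + s • φ x₁)) (γ' x₀ x₁) t)
    -- measurability of the integrands
    (hmeas₁ : Measurable fun x : F × F =>
      ‖Dφ (γ x.1 x.2) (uM t (γ x.1 x.2) - γ' x.1 x.2)‖ ^ 2)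
    (hmeas₂ : Measurable fun z : E × E =>
      ‖uE t ((1 - t) • z.1 + t • z.2) - (z.2 - z.1)‖ ^ 2) :
    ∫ x : F × F in U ×ˢ U,
        ‖Dφ (γ x.1 x.2) (uM t (γ x.1 x.2) - γ' x.1 x.2)‖ ^ 2 ∂(p.prod q)
      = ∫ z : E × E,
        ‖uE t ((1 - t) • z.1 + t • z.2) - (z.2 - z.1)‖ ^ 2
          ∂((p.map φ).prod (q.map φ)) := by
  classical
  open MeasureTheory in
  -- pointwise equality on U × U
  have key : ∀ x₀ ∈ U, ∀ x₁ ∈ U,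
      ‖Dφ (γ x₀ x₁) (uM t (γ x₀ x₁) - γ' x₀ x₁)‖ ^ 2
        = ‖uE t ((1 - t) • φ x₀ + t • φ x₁) - (φ x₁ - φ x₀)‖ ^ 2 := by
    intro x₀ hx₀ x₁ hx₁
    set z := (1 - t) • φ x₀ + t • φ x₁ with hz
    have hγz : γ x₀ x₁ = ψ z := hγ x₀ x₁
    have hγU : γ x₀ x₁ ∈ U := hγz ▸ hψU z
    -- derivative of the straight line
    have hline : HasDerivAt (fun s : ℝ => (1 - s) • φ x₀ + s • φ x₁)
        (φ x₁ - φ x₀) t := by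
      have h1 : HasDerivAt (fun s : ℝ => (1 - s) • φ x₀)
          ((-1 : ℝ) • φ x₀) t := by
        have := ((hasDerivAt_id t).const_sub 1).smul_const (φ x₀)
        simpa using this
      have h2 : HasDerivAt (fun s : ℝ => s • φ x₁) ((1 : ℝ) • φ x₁) t :=
        (hasDerivAt_id t).smul_const (φ x₁)
      have := h1.add h2
      exact this.congr_deriv (by simp only [neg_smul, one_smul]; abel)
    -- chain rule: φ ∘ curve
    have hcomp : HasDerivAt (fun s : ℝ => φ (ψ ((1 - s) • φ x₀ + s • φ x₁)))
        (Dφ (γ x₀ x₁) (γ' x₀ x₁)) t := by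
      have hD : HasFDerivAt φ (Dφ (γ x₀ x₁)) (ψ z) := by
        rw [hγz]; exact hDφ _ (hψU z)
      have := hD.comp_hasDerivAt t (by simpa [← hz] using hγ' x₀ x₁)
      exact this
    have heq : (fun s : ℝ => φ (ψ ((1 - s) • φ x₀ + s • φ x₁)))
        = fun s : ℝ => (1 - s) • φ x₀ + s • φ x₁ := by
      funext s; exact hφψ _
    rw [heq] at hcomp
    have hDγ' : Dφ (γ x₀ x₁) (γ' x₀ x₁) = φ x₁ - φ x₀ :=
      hcomp.unique hline
    have huEz : uE t z = Dφ (γ x₀ x₁) (uM t (γ x₀ x₁)) := by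
      rw [huE t z, hγz]
    rw [map_sub, hDγ', ← huEz]
  -- the a.e. statement on F × F
  have hpU : ∀ᵐ x ∂p, x ∈ U := by
    rw [MeasureTheory.ae_iff]; exact hp
  have hqU : ∀ᵐ x ∂q, x ∈ U := by
    rw [MeasureTheory.ae_iff]; exact hq
  have hprodU : ∀ᵐ x ∂(p.prod q), x ∈ U ×ˢ U := by
    have : (p.prod q) (U ×ˢ U)ᶜ = 0 := by
      have hsub : (U ×ˢ U)ᶜ ⊆ (Uᶜ ×ˢ Set.univ) ∪ (Set.univ ×ˢ Uᶜ) := by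
        intro x hx
        simp only [Set.mem_compl_iff, Set.mem_prod, not_and_or] at hx
        rcases hx with h | h
        · exact Or.inl ⟨h, Set.mem_univ _⟩
        · exact Or.inr ⟨Set.mem_univ _, h⟩
      refine MeasureTheory.measure_mono_null hsub ?_
      refine MeasureTheory.measure_union_null ?_ ?_
      · rw [MeasureTheory.Measure.prod_prod, hp, zero_mul]
      · rw [MeasureTheory.Measure.prod_prod, hq, mul_zero]
    rw [MeasureTheory.ae_iff]; exact this
  -- restrict = self
  have hrestr : (p.prod q).restrict (U ×ˢ U) = p.prod q :=
    MeasureTheory.Measure.restrict_eq_self_of_ae_mem hprodU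
  -- rewrite RHS via map
  have hmap : (p.map φ).prod (q.map φ) = (p.prod q).map (Prod.map φ φ) :=
    MeasureTheory.Measure.map_prod_map _ _ hφm hφm
  rw [hmap,
    MeasureTheory.integral_map (hφm.prodMap hφm).aemeasurable
      hmeas₂.aestronglyMeasurable]
  rw [show (∫ x : F × F in U ×ˢ U,
      ‖Dφ (γ x.1 x.2) (uM t (γ x.1 x.2) - γ' x.1 x.2)‖ ^ 2 ∂(p.prod q))
      = ∫ x : F × F, ‖Dφ (γ x.1 x.2) (uM t (γ x.1 x.2) - γ' x.1 x.2)‖ ^ 2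
          ∂((p.prod q).restrict (U ×ˢ U)) from rfl, hrestr]
  refine MeasureTheory.integral_congr_ae ?_
  filter_upwards [hprodU] with x hx
  exact key x.1 hx.1 x.2 hx.2
end

section
/- One explicit midpoint (second-order Runge–Kutta) step of the ODE on U, performed with the pullback exponential map and pullback parallel transport, equals the image under φ⁻¹ of the Euclidean midpoint step: suppose x_ℓ = φ⁻¹(z_ℓ) for some z_ℓ ∈ E, t_ℓ ∈ [0,1], h > 0. Set k₁ᴹ := u_M(t_ℓ, x_ℓ), x_A := exp_{x_ℓ}((h/2) k₁ᴹ), k₂ᴹ := u_M(t_ℓ + h/2, x_A), and x_{ℓ+1} := exp_{x_ℓ}( h · PT_{x_A → x_ℓ}(k₂ᴹ) ). Correspondingly set k₁ᴱ := u_E(t_ℓ, z_ℓ) and z_{ℓ+1} := z_ℓ + h · u_E(t_ℓ + h/2, z_ℓ + (h/2) k₁ᴱ). Then x_{ℓ+1} = φ⁻¹(z_{ℓ+1}). -/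
/-- One explicit midpoint (RK2) step on `U`, performed with the pullback
exponential map and pullback parallel transport, equals the image under `φ⁻¹` of the
Euclidean midpoint step. -/
theorem pullback_midpoint_step_equiv
    {F E : Type*} [NormedAddCommGroup F] [NormedSpace ℝ F] [FiniteDimensional ℝ F]
    [NormedAddCommGroup E] [NormedSpace ℝ E] [FiniteDimensional ℝ E]
    (U : Set F) (hU : IsOpen U)
    (φ : F → E) (ψ : E → F)
    (hψφ : ∀ x ∈ U, ψ (φ x) = x) (hφψ : ∀ z : E, φ (ψ z) = z)
    (hψU : ∀ z : E, ψ z ∈ U)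
    (Dφ : F → (F →L[ℝ] E)) (Dψ : E → (E →L[ℝ] F))
    (hDφ : ∀ x ∈ U, HasFDerivAt φ (Dφ x) x)
    (hDψ : ∀ z : E, HasFDerivAt ψ (Dψ z) z)
    (hDφc : ContinuousOn Dφ U) (hDψc : Continuous Dψ)
    (uM : ℝ → F → F) (uE : ℝ → E → E)
    (huE : ∀ t z, uE t z = Dφ (ψ z) (uM t (ψ z)))
    -- pullback exponential map
    (expM : F → F → F) (hexpM : ∀ x ξ, expM x ξ = ψ (φ x + Dφ x ξ))
    -- pullback parallel transport from `y` to `x`: `(Dφ x)⁻¹ = Dψ (φ x)`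
    (PT : F → F → F → F) (hPT : ∀ y x η, PT y x η = Dψ (φ x) (Dφ y η))
    (xl : F) (zl : E) (hxl : xl = ψ zl)
    (tl : ℝ) (htl : tl ∈ Set.Icc (0 : ℝ) 1) (h : ℝ) (hh : 0 < h) :
    let k₁M := uM tl xl
    let xA := expM xl ((h / 2) • k₁M)
    let k₂M := uM (tl + h / 2) xA
    let xnext := expM xl (h • PT xA xl k₂M)
    let k₁E := uE tl zl
    let znext := zl + h • uE (tl + h / 2) (zl + (h / 2) • k₁E)
    xnext = ψ znext := by
  intro k₁M xA k₂M xnext k₁E znext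
  -- Dφ (ψ z) ∘ Dψ z = id
  have hinv : ∀ z : E, ∀ v : E, Dφ (ψ z) (Dψ z v) = v := by
    intro z v
    have hcomp : HasFDerivAt (φ ∘ ψ) ((Dφ (ψ z)).comp (Dψ z)) z :=
      (hDφ _ (hψU z)).comp z (hDψ z)
    have hid : HasFDerivAt (φ ∘ ψ) (ContinuousLinearMap.id ℝ E) z := by
      have : (φ ∘ ψ) = id := funext fun w => hφψ w
      rw [this]; exact hasFDerivAt_id z
    have := hcomp.unique hid
    calc Dφ (ψ z) (Dψ z v) = ((Dφ (ψ z)).comp (Dψ z)) v := rfl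
      _ = v := by rw [this]; rfl
  have hφxl : φ xl = zl := by rw [hxl, hφψ]
  have hk₁ : k₁E = Dφ xl k₁M := by
    show uE tl zl = _
    rw [huE, ← hxl]
  have hxA : xA = ψ (zl + (h / 2) • k₁E) := by
    show expM xl ((h / 2) • k₁M) = _
    rw [hexpM, hφxl, hk₁, map_smul]
  have hφxA : φ xA = zl + (h / 2) • k₁E := by rw [hxA, hφψ]
  have hk₂ : uE (tl + h / 2) (zl + (h / 2) • k₁E) = Dφ xA k₂M := by
    rw [huE, ← hxA]
  show expM xl (h • PT xA xl k₂M) = ψ znext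
  rw [hexpM, hPT, hφxl, map_smul, hxl, hinv zl (Dφ xA k₂M), ← hk₂]
end

section
/- One explicit fourth-order Runge–Kutta (RK4) step of the ODE on U, performed with the pullback exponential map and pullback parallel transport, equals the image under φ⁻¹ of the Euclidean RK4 step. Precisely, suppose x_ℓ = φ⁻¹(z_ℓ) for some z_ℓ ∈ E, t_ℓ ∈ [0,1], h > 0. Define on U: k₁ᴹ := u_M(t_ℓ, x_ℓ); x_A := exp_{x_ℓ}((h/2) k₁ᴹ); k₂ := PT_{x_A → x_ℓ}( u_M(t_ℓ + h/2, x_A) ); x_B := exp_{x_ℓ}((h/2) k₂); k₃ := PT_{x_B → x_ℓ}( u_M(t_ℓ + h/2, x_B) ); x_C := exp_{x_ℓ}(h k₃); k₄ := PT_{x_C → x_ℓ}( u_M(t_ℓ + h, x_C) ); and x_{ℓ+1} := exp_{x_ℓ}( (h/6)(k₁ᴹ + 2k₂ + 2k₃ + k₄) ). Define on E: k₁ᴱ := u_E(t_ℓ, z_ℓ); k₂ᴱ := u_E(t_ℓ + h/2, z_ℓ + (h/2) k₁ᴱ); k₃ᴱ := u_E(t_ℓ + h/2, z_ℓ + (h/2)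 k₂ᴱ); k₄ᴱ := u_E(t_ℓ + h, z_ℓ + h k₃ᴱ); and z_{ℓ+1} := z_ℓ + (h/6)(k₁ᴱ + 2k₂ᴱ + 2k₃ᴱ + k₄ᴱ). Then x_{ℓ+1} = φ⁻¹(z_{ℓ+1}). -/
/-- One explicit fourth-order Runge--Kutta (RK4) step on `U`, performed with the
pullback exponential map and pullback parallel transport, equals the image under `φ⁻¹` of the
Euclidean RK4 step. -/
theorem pullback_rk4_step_equiv
    {F E : Type*} [NormedAddCommGroup F] [NormedSpace ℝ F] [FiniteDimensional ℝ F]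
    [NormedAddCommGroup E] [NormedSpace ℝ E] [FiniteDimensional ℝ E]
    (U : Set F) (hU : IsOpen U)
    (φ : F → E) (ψ : E → F)
    (hψφ : ∀ x ∈ U, ψ (φ x) = x) (hφψ : ∀ z : E, φ (ψ z) = z)
    (hψU : ∀ z : E, ψ z ∈ U)
    (Dφ : F → (F →L[ℝ] E)) (Dψ : E → (E →L[ℝ] F))
    (hDφ : ∀ x ∈ U, HasFDerivAt φ (Dφ x) x)
    (hDψ : ∀ z : E, HasFDerivAt ψ (Dψ z) z)
    (hDφc : ContinuousOn Dφ U) (hDψc : Continuous Dψ)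
    (uM : ℝ → F → F) (uE : ℝ → E → E)
    (huE : ∀ t z, uE t z = Dφ (ψ z) (uM t (ψ z)))
    -- pullback exponential map
    (expM : F → F → F) (hexpM : ∀ x ξ, expM x ξ = ψ (φ x + Dφ x ξ))
    -- pullback parallel transport from `y` to `x`: `(Dφ x)⁻¹ = Dψ (φ x)`
    (PT : F → F → F → F) (hPT : ∀ y x η, PT y x η = Dψ (φ x) (Dφ y η))
    (xl : F) (zl : E) (hxl : xl = ψ zl)
    (tl : ℝ) (htl : tl ∈ Set.Icc (0 : ℝ) 1) (h : ℝ) (hh : 0 < h) :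
    let k₁M := uM tl xl
    let xA := expM xl ((h / 2) • k₁M)
    let k₂ := PT xA xl (uM (tl + h / 2) xA)
    let xB := expM xl ((h / 2) • k₂)
    let k₃ := PT xB xl (uM (tl + h / 2) xB)
    let xC := expM xl (h • k₃)
    let k₄ := PT xC xl (uM (tl + h) xC)
    let xnext := expM xl ((h / 6) • (k₁M + (2 : ℝ) • k₂ + (2 : ℝ) • k₃ + k₄))
    let k₁E := uE tl zl
    let k₂E := uE (tl + h / 2) (zl + (h / 2) • k₁E)
    let k₃E := uE (tl + h / 2) (zl + (h / 2) • k₂E)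
    let k₄E := uE (tl + h) (zl + h • k₃E)
    let znext := zl + (h / 6) • (k₁E + (2 : ℝ) • k₂E + (2 : ℝ) • k₃E + k₄E)
    xnext = ψ znext := by
  intro k₁M xA k₂ xB k₃ xC k₄ xnext k₁E k₂E k₃E k₄E znext
  -- key: Dφ (ψ z) ∘ Dψ z = id
  have hinv : ∀ (z : E) (v : E), Dφ (ψ z) (Dψ z v) = v := by
    intro z v
    have hcomp : HasFDerivAt (φ ∘ ψ) ((Dφ (ψ z)).comp (Dψ z)) z :=
      (hDφ (ψ z) (hψU z)).comp z (hDψ z)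
    have hfun : (φ ∘ ψ) = id := funext hφψ
    rw [hfun] at hcomp
    have := hcomp.unique (hasFDerivAt_id z)
    calc Dφ (ψ z) (Dψ z v) = ((Dφ (ψ z)).comp (Dψ z)) v := rfl
      _ = (ContinuousLinearMap.id ℝ E) v := by rw [this]
      _ = v := rfl
  have hφxl : φ xl = zl := by rw [hxl, hφψ]
  -- k₁
  have hk1 : Dφ xl k₁M = k₁E := by
    simp only [k₁M, k₁E, huE, hxl]
  have hxA : xA = ψ (zl + (h / 2) • k₁E) := by
    show expM xl ((h / 2) • k₁M) = _
    rw [hexpM, hφxl, ContinuousLinearMap.map_smul, hk1]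
  have hφxA : φ xA = zl + (h / 2) • k₁E := by rw [hxA, hφψ]
  have hk2E : k₂E = Dφ xA (uM (tl + h / 2) xA) := by
    simp only [k₂E, huE, ← hxA]
  have hk2 : Dφ xl k₂ = k₂E := by
    simp only [k₂, hPT, hφxl, hk2E, hxl, hφψ, hinv]
  have hxB : xB = ψ (zl + (h / 2) • k₂E) := by
    show expM xl ((h / 2) • k₂) = _
    rw [hexpM, hφxl, ContinuousLinearMap.map_smul, hk2]
  have hk3E : k₃E = Dφ xB (uM (tl + h / 2) xB) := by
    simp only [k₃E, huE, ← hxB]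
  have hk3 : Dφ xl k₃ = k₃E := by
    simp only [k₃, hPT, hφxl, hk3E, hxl, hφψ, hinv]
  have hxC : xC = ψ (zl + h • k₃E) := by
    show expM xl (h • k₃) = _
    rw [hexpM, hφxl, ContinuousLinearMap.map_smul, hk3]
  have hk4E : k₄E = Dφ xC (uM (tl + h) xC) := by
    simp only [k₄E, huE, ← hxC]
  have hk4 : Dφ xl k₄ = k₄E := by
    simp only [k₄, hPT, hφxl, hk4E, hxl, hφψ, hinv]
  show expM xl ((h / 6) • (k₁M + (2 : ℝ) • k₂ + (2 : ℝ) • k₃ + k₄)) = ψ znext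
  rw [hexpM, hφxl]
  congr 1
  congr 1
  simp only [znext, ContinuousLinearMap.map_smul, ContinuousLinearMap.map_add, hk1, hk2, hk3, hk4]
end

section
/- The normalized Cholesky map is inverted by the inverse normalized Cholesky map on correlation matrices: for every real d×d symmetric positive definite matrix Σ with all diagonal entries equal to 1, nchol⁻¹( nchol(Σ) ) = Σ, where nchol(Σ) := diag(chol(Σ))⁻¹ chol(Σ) and nchol⁻¹(L) := D^{-1/2} L Lᵀ D^{-1/2} with D := diag(L Lᵀ). -/
open Matrix

/-- `nchol⁻¹ (nchol Σ) = Σ` for every correlation matrix `Σ` (SPD with unit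
diagonal), where `chol Σ = L₀` is the Cholesky factor (`Σ = L₀ L₀ᵀ`, `L₀` lower triangular
with strictly positive diagonal), `nchol Σ := diag(L₀)⁻¹ L₀`, and
`nchol⁻¹(L) := D^{-1/2} L Lᵀ D^{-1/2}` with `D := diag(L Lᵀ)`. -/
theorem nchol_inv_nchol (d : ℕ)
    (S : Matrix (Fin d) (Fin d) ℝ) (hS : S.PosDef) (hSsymm : S.IsSymm)
    (hdiag : ∀ i, S i i = 1)
    (L₀ : Matrix (Fin d) (Fin d) ℝ)
    (hL₀lower : ∀ i j : Fin d, i < j → L₀ i j = 0)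
    (hL₀diag : ∀ i, 0 < L₀ i i)
    (hchol : S = L₀ * L₀ᵀ)
    (L : Matrix (Fin d) (Fin d) ℝ)
    (hL : L = (Matrix.diagonal fun i => L₀ i i)⁻¹ * L₀) :
    (Matrix.diagonal fun i => (Real.sqrt ((L * Lᵀ) i i))⁻¹) * (L * Lᵀ) *
      (Matrix.diagonal fun i => (Real.sqrt ((L * Lᵀ) i i))⁻¹) = S := by
  set w : Fin d → ℝ := fun i => (L₀ i i)⁻¹ with hw
  have hinv : (Matrix.diagonal fun i => L₀ i i)⁻¹ = Matrix.diagonal w := by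
    apply Matrix.inv_eq_right_inv
    rw [Matrix.diagonal_mul_diagonal]
    convert Matrix.diagonal_one with i
    exact mul_inv_cancel₀ (hL₀diag i).ne'
  have hLd : L = Matrix.diagonal w * L₀ := by rw [hL, hinv]
  have key : L * Lᵀ = Matrix.diagonal w * S * Matrix.diagonal w := by
    rw [hLd, Matrix.transpose_mul, Matrix.diagonal_transpose, hchol]
    noncomm_ring
  have hdd : ∀ i, (L * Lᵀ) i i = (L₀ i i)⁻¹ * (L₀ i i)⁻¹ := by
    intro i
    rw [key]
    simp [Matrix.mul_apply, Matrix.diagonal, hdiag i, hw, Finset.sum_ite_eq,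
      Finset.sum_ite_eq']
  have hsqrt : (fun i => (Real.sqrt ((L * Lᵀ) i i))⁻¹) = fun i => L₀ i i := by
    ext i
    rw [hdd i, Real.sqrt_mul_self (inv_nonneg.mpr (hL₀diag i).le), inv_inv]
  rw [hsqrt, key, ← Matrix.mul_assoc, ← Matrix.mul_assoc,
    Matrix.diagonal_mul_diagonal, Matrix.mul_assoc,
    Matrix.diagonal_mul_diagonal]
  have h1 : (fun i => L₀ i i * w i) = fun _ => (1:ℝ) := by
    ext i; exact mul_inv_cancel₀ (hL₀diag i).ne'
  have h2 : (fun i => w i * L₀ i i) = fun _ => (1:ℝ) := by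
    ext i; exact inv_mul_cancel₀ (hL₀diag i).ne'
  rw [h1, h2, Matrix.diagonal_one, Matrix.one_mul, Matrix.mul_one]
end

section
/- The inverse normalized Cholesky map is inverted by the normalized Cholesky map on unit lower-triangular matrices: for every real d×d lower-triangular matrix L with all diagonal entries equal to 1, nchol( nchol⁻¹(L) ) = L, where nchol⁻¹(L) := D^{-1/2} L Lᵀ D^{-1/2} with D := diag(L Lᵀ), and nchol(Σ) := diag(chol(Σ))⁻¹ chol(Σ). -/
open Matrix

section Aux

variable {d : ℕ}

private lemma diag_mul_lower (P Q : Matrix (Fin d) (Fin d) ℝ)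
    (hP : ∀ i j : Fin d, i < j → P i j = 0) (hQ : ∀ i j : Fin d, i < j → Q i j = 0)
    (i : Fin d) : (P * Q) i i = P i i * Q i i := by
  rw [Matrix.mul_apply]
  apply Finset.sum_eq_single i
  · intro k _ hk
    rcases lt_or_gt_of_ne hk with h | h
    · rw [hQ k i h, mul_zero]
    · rw [hP i k h, zero_mul]
  · simp

private lemma diag_mul_upper (P Q : Matrix (Fin d) (Fin d) ℝ)
    (hP : ∀ i j : Fin d, j < i → P i j = 0) (hQ : ∀ i j : Fin d, j < i → Q i j = 0)
    (i : Fin d) : (P * Q) i i = P i i * Q i i := by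
  rw [Matrix.mul_apply]
  apply Finset.sum_eq_single i
  · intro k _ hk
    rcases lt_or_gt_of_ne hk with h | h
    · rw [hP i k h, zero_mul]
    · rw [hQ k i h, mul_zero]
  · simp

/-- Uniqueness of the Cholesky factor. -/
private lemma chol_unique (A B : Matrix (Fin d) (Fin d) ℝ)
    (hAlow : ∀ i j : Fin d, i < j → A i j = 0) (hApos : ∀ i, 0 < A i i)
    (hBlow : ∀ i j : Fin d, i < j → B i j = 0) (hBpos : ∀ i, 0 < B i i)
    (h : A * Aᵀ = B * Bᵀ) : A = B := by
  have hAbt : A.BlockTriangular OrderDual.toDual := fun i j hij => hAlow i j hij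
  have hBbt : B.BlockTriangular OrderDual.toDual := fun i j hij => hBlow i j hij
  have hAdet : IsUnit A.det := by
    rw [Matrix.det_of_lowerTriangular A hAbt]
    exact (Finset.prod_pos fun i _ => hApos i).ne'.isUnit
  have hBdet : IsUnit B.det := by
    rw [Matrix.det_of_lowerTriangular B hBbt]
    exact (Finset.prod_pos fun i _ => hBpos i).ne'.isUnit
  haveI : Invertible A := A.invertibleOfIsUnitDet hAdet
  haveI : Invertible B := B.invertibleOfIsUnitDet hBdet
  have hBinv : B⁻¹.BlockTriangular OrderDual.toDual :=
    Matrix.blockTriangular_inv_of_blockTriangular hBbt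
  have hAinv : A⁻¹.BlockTriangular OrderDual.toDual :=
    Matrix.blockTriangular_inv_of_blockTriangular hAbt
  set C := B⁻¹ * A with hC
  have hClow : ∀ i j : Fin d, i < j → C i j = 0 := fun i j hij =>
    (hBinv.mul (fun i j hij => hAlow i j hij)) hij
  -- C = Bᵀ * (A⁻¹)ᵀ, hence upper triangular
  have hC2 : C = Bᵀ * (A⁻¹)ᵀ := by
    have h1 : B⁻¹ * (A * Aᵀ) * (Aᵀ)⁻¹ = B⁻¹ * (B * Bᵀ) * (Aᵀ)⁻¹ := by rw [h]
    have hAT : Invertible Aᵀ := A.transpose.invertibleOfIsUnitDet (by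
      rwa [Matrix.det_transpose])
    have hATinv : (Aᵀ)⁻¹ = (A⁻¹)ᵀ := (Matrix.transpose_nonsing_inv A).symm
    calc C = B⁻¹ * A * (Aᵀ * (Aᵀ)⁻¹) := by
              rw [Matrix.mul_inv_of_invertible, mul_one]
      _ = B⁻¹ * (A * Aᵀ) * (Aᵀ)⁻¹ := by simp only [mul_assoc]
      _ = B⁻¹ * (B * Bᵀ) * (Aᵀ)⁻¹ := h1
      _ = (B⁻¹ * B) * (Bᵀ * (Aᵀ)⁻¹) := by simp only [mul_assoc]
      _ = Bᵀ * (Aᵀ)⁻¹ := by rw [Matrix.inv_mul_of_invertible, one_mul]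
      _ = Bᵀ * (A⁻¹)ᵀ := by rw [hATinv]
  have hCup : ∀ i j : Fin d, j < i → C i j = 0 := by
    intro i j hij
    rw [hC2, Matrix.mul_apply]
    apply Finset.sum_eq_zero
    intro k _
    rcases lt_or_ge k i with hk | hk
    · exact mul_eq_zero_of_left (hBlow k i hk) _
    · exact mul_eq_zero_of_right _
        (hAinv (OrderDual.toDual_lt_toDual.mpr (lt_of_lt_of_le hij hk)))
  -- diagonal of B⁻¹ is the inverse of the diagonal of B
  have hBinvdiag : ∀ i, B⁻¹ i i = (B i i)⁻¹ := by
    intro i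
    have h2 := diag_mul_lower B⁻¹ B (fun i j hij => hBinv hij) hBlow i
    rw [Matrix.inv_mul_of_invertible, Matrix.one_apply_eq] at h2
    exact eq_inv_of_mul_eq_one_left h2.symm
  have hAinvdiag : ∀ i, A⁻¹ i i = (A i i)⁻¹ := by
    intro i
    have h2 := diag_mul_lower A⁻¹ A (fun i j hij => hAinv hij) hAlow i
    rw [Matrix.inv_mul_of_invertible, Matrix.one_apply_eq] at h2
    exact eq_inv_of_mul_eq_one_left h2.symm
  -- two expressions for the diagonal of C
  have hCdiag1 : ∀ i, C i i = (B i i)⁻¹ * A i i := by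
    intro i
    rw [hC, diag_mul_lower B⁻¹ A (fun i j hij => hBinv hij) hAlow i, hBinvdiag]
  have hCdiag2 : ∀ i, C i i = B i i * (A i i)⁻¹ := by
    intro i
    rw [hC2,
      diag_mul_upper Bᵀ (A⁻¹)ᵀ (fun i j hij => hBlow j i hij)
        (fun i j hij => hAinv hij) i,
      Matrix.transpose_apply, Matrix.transpose_apply, hAinvdiag]
  have hdiagC : ∀ i, C i i = 1 := by
    intro i
    have h1 := (hCdiag1 i).symm.trans (hCdiag2 i)
    have hA := (hApos i).ne'
    have hB := (hBpos i).ne'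
    have hsq : A i i * A i i = B i i * B i i := by
      field_simp at h1
      linarith [h1]
    have hAB : A i i = B i i :=
      (mul_self_inj (hApos i).le (hBpos i).le).mp hsq
    rw [hCdiag1 i, ← hAB, inv_mul_cancel₀ hA]
  have hC1 : C = 1 := by
    ext i j
    rcases lt_trichotomy i j with hij | rfl | hij
    · rw [hClow i j hij, Matrix.one_apply_ne hij.ne]
    · rw [hdiagC i, Matrix.one_apply_eq]
    · rw [hCup i j hij, Matrix.one_apply_ne hij.ne']
  calc A = B * (B⁻¹ * A) := by rw [← mul_assoc, Matrix.mul_inv_of_invertible, one_mul]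
    _ = B := by rw [← hC, hC1, mul_one]

end Aux

/-- `nchol (nchol⁻¹ L) = L` for every real lower-triangular `L` with unit
diagonal, where `nchol⁻¹(L) := D^{-1/2} L Lᵀ D^{-1/2}` with `D := diag(L Lᵀ)`, and
`nchol Σ := diag(chol Σ)⁻¹ chol Σ`; here `L₀ = chol(nchol⁻¹ L)` is the Cholesky factor of
`nchol⁻¹ L` (lower triangular with strictly positive diagonal). -/
theorem nchol_nchol_inv (d : ℕ)
    (L : Matrix (Fin d) (Fin d) ℝ)
    (hLlower : ∀ i j : Fin d, i < j → L i j = 0)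
    (hLdiag : ∀ i, L i i = 1)
    (L₀ : Matrix (Fin d) (Fin d) ℝ)
    (hL₀lower : ∀ i j : Fin d, i < j → L₀ i j = 0)
    (hL₀diag : ∀ i, 0 < L₀ i i)
    (hchol : (Matrix.diagonal fun i => (Real.sqrt ((L * Lᵀ) i i))⁻¹) * (L * Lᵀ) *
        (Matrix.diagonal fun i => (Real.sqrt ((L * Lᵀ) i i))⁻¹) = L₀ * L₀ᵀ) :
    (Matrix.diagonal fun i => L₀ i i)⁻¹ * L₀ = L := by
  set f : Fin d → ℝ := fun i => (Real.sqrt ((L * Lᵀ) i i))⁻¹ with hf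
  have hDpos : ∀ i, 0 < (L * Lᵀ) i i := by
    intro i
    rw [Matrix.mul_apply]
    have : (0:ℝ) < L i i * Lᵀ i i := by rw [Matrix.transpose_apply, hLdiag]; norm_num
    refine Finset.sum_pos' (fun k _ => ?_) ⟨i, Finset.mem_univ i, this⟩
    rw [Matrix.transpose_apply]
    exact mul_self_nonneg _
  have hfpos : ∀ i, 0 < f i := fun i => inv_pos.mpr (Real.sqrt_pos.mpr (hDpos i))
  set A : Matrix (Fin d) (Fin d) ℝ := Matrix.diagonal f * L with hA
  have hAapply : ∀ i j, A i j = f i * L i j := by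
    intro i j; rw [hA, Matrix.diagonal_mul]
  have hAlow : ∀ i j : Fin d, i < j → A i j = 0 := by
    intro i j hij; rw [hAapply, hLlower i j hij, mul_zero]
  have hApos : ∀ i, 0 < A i i := by
    intro i; rw [hAapply, hLdiag, mul_one]; exact hfpos i
  have hAAT : A * Aᵀ = L₀ * L₀ᵀ := by
    rw [hA, Matrix.transpose_mul, Matrix.diagonal_transpose, ← hchol]
    simp only [mul_assoc]
  have hAL₀ : A = L₀ := chol_unique A L₀ hAlow hApos hL₀lower hL₀diag hAAT
  have hdiagA : (fun i => L₀ i i) = f := by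
    funext i
    rw [← hAL₀, hAapply, hLdiag, mul_one]
  have h2 : (fun i => (f i)⁻¹ * f i) = fun _ : Fin d => (1 : ℝ) := by
    funext i
    exact inv_mul_cancel₀ (hfpos i).ne'
  have hinv : (Matrix.diagonal f)⁻¹ = Matrix.diagonal fun i => (f i)⁻¹ :=
    (Matrix.inv_eq_left_inv
      (by rw [Matrix.diagonal_mul_diagonal, h2, Matrix.diagonal_one]))
  rw [hdiagA, ← hAL₀, hA, hinv, ← mul_assoc, Matrix.diagonal_mul_diagonal, h2,
    Matrix.diagonal_one, one_mul]
end
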